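/- Let p be a prime and R = (ZMod p)^A. If f ∈ R[X] is a polynomial with all exponents at most p−1 and h = r·x^m is any monomial of f (with nonzero coefficient r ∈ R), then h belongs to the R-polynomial linearly closed clonoid generated by f. -/
import Mathlib


/-- An `R`-polynomial linearly closed clonoid, for `R = (ZMod p)^A`: a nonempty set of
multivariate polynomials over `R` closed under `ZMod p`-linear combinations and under
substituting a `ZMod p`-linear combination of variables for a variable. -/
def IsRPolyLinClosedClonoid (p : ℕ) (A : Type*)
    (C : Set (MvPolynomial ℕ (A → ZMod p))) : Prop :=
  C.Nonempty ∧
  (∀ (a b : ZMod p) (f g : MvPolynomial ℕ (A → ZMod p)),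
    f ∈ C → g ∈ C → a • f + b • g ∈ C) ∧
  (∀ (f : MvPolynomial ℕ (A → ZMod p)) (l s : ℕ) (a : Fin s → ZMod p), f ∈ C →
    MvPolynomial.bind₁
      (fun j => if j = l then ∑ i : Fin s, a i • MvPolynomial.X (i : ℕ)
                else MvPolynomial.X j) f ∈ C)

namespace ClonoidAux

open MvPolynomial

variable {p : ℕ} {A : Type*}

lemma zero_mem {C : Set (MvPolynomial ℕ (A → ZMod p))}
    (hC : IsRPolyLinClosedClonoid p A C) : (0 : MvPolynomial ℕ (A → ZMod p)) ∈ C := by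
  obtain ⟨⟨g, hg⟩, hlin, _⟩ := hC
  simpa using hlin 0 0 g g hg hg

lemma sum_smul_mem {C : Set (MvPolynomial ℕ (A → ZMod p))}
    (hC : IsRPolyLinClosedClonoid p A C) {ι : Type*} [DecidableEq ι] (s : Finset ι)
    (a : ι → ZMod p) (g : ι → MvPolynomial ℕ (A → ZMod p))
    (hg : ∀ i ∈ s, g i ∈ C) : (∑ i ∈ s, a i • g i) ∈ C := by
  induction s using Finset.induction_on with
  | empty => simpa using zero_mem hC
  | @insert i s hi ih =>
      rw [Finset.sum_insert hi]
      have h := hC.2.1 (a i) 1 (g i) (∑ j ∈ s, a j • g j)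
        (hg i (Finset.mem_insert_self i s)) (ih fun j hj => hg j (Finset.mem_insert_of_mem hj))
      simpa using h

/-- The substitution `x_l ↦ c • x_l`. -/
noncomputable def T (c : ZMod p) (l : ℕ) (f : MvPolynomial ℕ (A → ZMod p)) :
    MvPolynomial ℕ (A → ZMod p) :=
  MvPolynomial.bind₁ (fun j => if j = l then c • MvPolynomial.X l else MvPolynomial.X j) f

lemma T_mem {C : Set (MvPolynomial ℕ (A → ZMod p))}
    (hC : IsRPolyLinClosedClonoid p A C) (c : ZMod p) (l : ℕ)
    {f : MvPolynomial ℕ (A → ZMod p)} (hf : f ∈ C) : T c l f ∈ C := by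
  have h := hC.2.2 f l (l + 1) (fun i => if (i : ℕ) = l then c else 0) hf
  have he : (fun j => if j = l then
      ∑ i : Fin (l+1), (if (i : ℕ) = l then c else 0) • MvPolynomial.X (i : ℕ)
      else MvPolynomial.X j)
      = (fun j => if j = l then c • MvPolynomial.X l else MvPolynomial.X (R := A → ZMod p) j) := by
    funext j
    by_cases hj : j = l
    · simp only [hj, if_pos rfl]
      rw [Fintype.sum_eq_single (⟨l, Nat.lt_succ_self l⟩ : Fin (l+1))]
      · simp
      · intro i hi
        have : (i : ℕ) ≠ l := fun h => hi (Fin.ext (by simpa using h))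
        simp [this]
    · simp [hj]
  rw [T]
  rw [he] at h
  exact h

lemma T_monomial (c : ZMod p) (l : ℕ) (m' : ℕ →₀ ℕ) (r : A → ZMod p) :
    T c l (MvPolynomial.monomial m' r) = c ^ (m' l) • MvPolynomial.monomial m' r := by
  rw [T, bind₁_monomial]
  by_cases hl : l ∈ m'.support
  · rw [← Finset.mul_prod_erase _ _ hl, if_pos rfl, smul_pow]
    have hprod : (∏ i ∈ m'.support.erase l,
        (if i = l then c • MvPolynomial.X l else MvPolynomial.X i) ^ m' i)
        = ∏ i ∈ m'.support.erase l, MvPolynomial.X (R := A → ZMod p) i ^ m' i :=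
      Finset.prod_congr rfl fun i hi => by rw [if_neg (Finset.ne_of_mem_erase hi)]
    rw [hprod, monomial_eq, Finsupp.prod, ← Finset.mul_prod_erase _ _ hl,
      smul_mul_assoc, mul_smul_comm]
  · rw [Finsupp.notMem_support_iff.mp hl, pow_zero, one_smul, monomial_eq, Finsupp.prod]
    congr 1
    exact Finset.prod_congr rfl fun i hi => by
      rw [if_neg (by rintro rfl; exact hl hi)]

lemma coeff_T (c : ZMod p) (l : ℕ) (f : MvPolynomial ℕ (A → ZMod p)) (m' : ℕ →₀ ℕ) :
    MvPolynomial.coeff m' (T c l f) = c ^ (m' l) • MvPolynomial.coeff m' f := by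
  conv_lhs => rw [f.as_sum]
  rw [T, map_sum]
  have : ∀ m'' ∈ f.support,
      MvPolynomial.bind₁ (fun j => if j = l then c • MvPolynomial.X l else MvPolynomial.X j)
        (MvPolynomial.monomial m'' (MvPolynomial.coeff m'' f))
      = MvPolynomial.monomial m'' (c ^ (m'' l) • MvPolynomial.coeff m'' f) := fun m'' _ => by
    rw [show MvPolynomial.bind₁
        (fun j => if j = l then c • MvPolynomial.X l else MvPolynomial.X j)
        (MvPolynomial.monomial m'' (MvPolynomial.coeff m'' f))
        = T c l (MvPolynomial.monomial m'' (MvPolynomial.coeff m'' f)) from rfl,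
      T_monomial, smul_monomial]
  rw [Finset.sum_congr rfl this, MvPolynomial.coeff_sum]
  by_cases hm' : m' ∈ f.support
  · rw [Finset.sum_eq_single_of_mem m' hm' (fun b _ hb => by
      rw [MvPolynomial.coeff_monomial, if_neg hb]), MvPolynomial.coeff_monomial, if_pos rfl]
  · rw [MvPolynomial.notMem_support_iff.mp hm', smul_zero]
    exact Finset.sum_eq_zero fun b hb => by
      rw [MvPolynomial.coeff_monomial, if_neg (by rintro rfl; exact hm' hb)]

/-- weights for extracting the degree-`d` part in one variable -/
def w (p : ℕ) (d : ℕ) (c : ZMod p) : ZMod p :=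
  if d = 0 then (if c = 0 then 1 else 0) else -(c ^ (p - 1 - d))

lemma sum_pow [NeZero p] (hp : p.Prime) (k : ℕ) (hk : k < 2 * (p - 1)) :
    ∑ c : ZMod p, c ^ k = if k = p - 1 then -1 else 0 := by
  haveI := Fact.mk hp
  have hp2 := hp.two_le
  rcases lt_trichotomy k (p - 1) with h | h | h
  · rw [if_neg h.ne]
    exact FiniteField.sum_pow_lt_card_sub_one (ZMod p) k (by rwa [ZMod.card])
  · rw [if_pos h]
    have h0 : k ≠ 0 := by omega
    have hz : (0 : ZMod p) ^ k = 0 := zero_pow h0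
    rw [← Finset.sum_erase (f := fun c : ZMod p => c ^ k) Finset.univ hz]
    have : ∀ c ∈ Finset.univ.erase (0 : ZMod p), c ^ k = 1 := fun c hc => by
      rw [h]; exact ZMod.pow_card_sub_one_eq_one (Finset.ne_of_mem_erase hc)
    rw [Finset.sum_congr rfl this, Finset.sum_const,
      Finset.card_erase_of_mem (Finset.mem_univ _), Finset.card_univ, ZMod.card,
      nsmul_eq_mul, mul_one, Nat.cast_sub hp.one_le, ZMod.natCast_self, Nat.cast_one, zero_sub]
  · rw [if_neg (by omega)]
    set k' := k - (p - 1) with hk'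
    have hsplit : k = (p - 1) + k' := by omega
    have hcong : ∀ c : ZMod p, c ^ k = c ^ k' := fun c => by
      by_cases hc : c = 0
      · rw [hc, zero_pow (by omega : k ≠ 0), zero_pow (by omega : k' ≠ 0)]
      · rw [hsplit, pow_add, ZMod.pow_card_sub_one_eq_one hc, one_mul]
    rw [Finset.sum_congr rfl fun c _ => hcong c]
    exact FiniteField.sum_pow_lt_card_sub_one (ZMod p) k' (by rw [ZMod.card]; omega)

lemma sum_w [NeZero p] (hp : p.Prime) (d d' : ℕ) (hd : d ≤ p - 1) (hd' : d' ≤ p - 1) :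
    ∑ c : ZMod p, w p d c * c ^ d' = if d' = d then 1 else 0 := by
  haveI := Fact.mk hp
  by_cases h0 : d = 0
  · subst h0
    have hw : ∀ c : ZMod p, w p 0 c * c ^ d' = if c = 0 then (0 : ZMod p) ^ d' else 0 :=
      fun c => by by_cases hc : c = 0 <;> simp [w, hc]
    rw [Finset.sum_congr rfl fun c _ => hw c,
      Finset.sum_ite_eq' Finset.univ (0 : ZMod p) (fun _ => (0 : ZMod p) ^ d'),
      if_pos (Finset.mem_univ _)]
    by_cases hd'0 : d' = 0
    · rw [hd'0, pow_zero, if_pos rfl]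
    · rw [zero_pow hd'0, if_neg hd'0]
  · have h1 : 1 ≤ d := Nat.one_le_iff_ne_zero.mpr h0
    have hterm : ∀ c : ZMod p, w p d c * c ^ d' = -(c ^ (p - 1 - d + d')) := fun c => by
      rw [w, if_neg h0, pow_add]; ring
    rw [Finset.sum_congr rfl fun c _ => hterm c, Finset.sum_neg_distrib,
      sum_pow hp _ (by omega)]
    by_cases hdd : d' = d
    · rw [if_pos hdd, if_pos (by omega : p - 1 - d + d' = p - 1), neg_neg]
    · rw [if_neg hdd, if_neg (by omega : ¬(p - 1 - d + d' = p - 1)), neg_zero]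

/-- the degree-`d`-in-`x_l` extraction operator -/
noncomputable def Eop [NeZero p] (d l : ℕ) (f : MvPolynomial ℕ (A → ZMod p)) :
    MvPolynomial ℕ (A → ZMod p) :=
  ∑ c : ZMod p, w p d c • T c l f

lemma Eop_mem [NeZero p] {C : Set (MvPolynomial ℕ (A → ZMod p))}
    (hC : IsRPolyLinClosedClonoid p A C) (d l : ℕ)
    {f : MvPolynomial ℕ (A → ZMod p)} (hf : f ∈ C) : Eop d l f ∈ C :=
  sum_smul_mem hC Finset.univ _ _ fun c _ => T_mem hC c l hf

lemma coeff_Eop [NeZero p] (d l : ℕ) (f : MvPolynomial ℕ (A → ZMod p)) (m' : ℕ →₀ ℕ) :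
    MvPolynomial.coeff m' (Eop d l f)
      = (∑ c : ZMod p, w p d c * c ^ (m' l)) • MvPolynomial.coeff m' f := by
  rw [Eop, MvPolynomial.coeff_sum, Finset.sum_smul]
  exact Finset.sum_congr rfl fun c _ => by
    rw [MvPolynomial.coeff_smul, coeff_T, smul_smul]

lemma aux (hp : p.Prime) (V : Finset ℕ) :
    ∀ (C : Set (MvPolynomial ℕ (A → ZMod p))), IsRPolyLinClosedClonoid p A C →
    ∀ f : MvPolynomial ℕ (A → ZMod p), f ∈ C →
    (∀ m' ∈ f.support, ∀ i, m' i ≤ p - 1) →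
    ∀ m : ℕ →₀ ℕ, m ∈ f.support →
    (∀ l ∉ V, ∀ m' ∈ f.support, m' l = m l) →
    MvPolynomial.monomial m (MvPolynomial.coeff m f) ∈ C := by
  classical
  haveI := Fact.mk hp
  haveI : NeZero p := ⟨hp.pos.ne'⟩
  induction V using Finset.induction_on with
  | empty =>
      intro C hC f hf hexp m hm hV
      have hsupp : f.support = {m} := by
        apply Finset.eq_singleton_iff_unique_mem.mpr
        refine ⟨hm, fun m' hm' => ?_⟩
        ext i
        exact hV i (Finset.notMem_empty i) m' hm'
      have hfm : f = MvPolynomial.monomial m (MvPolynomial.coeff m f) := by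
        conv_lhs => rw [f.as_sum]
        rw [hsupp, Finset.sum_singleton]
      rw [← hfm]; exact hf
  | @insert l V hlV ih =>
      intro C hC f hf hexp m hm hV
      set g := Eop (m l) l f with hg
      have hcoeff : ∀ m' : ℕ →₀ ℕ, MvPolynomial.coeff m' g
          = if m' l = m l then MvPolynomial.coeff m' f else 0 := by
        intro m'
        by_cases hs : m' ∈ f.support
        · rw [hg, coeff_Eop, sum_w hp (m l) (m' l) (hexp m hm l) (hexp m' hs l)]
          split_ifs <;> simp
        · rw [hg, coeff_Eop, MvPolynomial.notMem_support_iff.mp hs, smul_zero]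
          split_ifs <;> rfl
      have hsub : g.support ⊆ f.support := by
        intro m' hm'
        rw [MvPolynomial.mem_support_iff] at hm' ⊢
        intro h0
        apply hm'
        rw [hcoeff, h0]
        split_ifs <;> rfl
      have hmg : m ∈ g.support := by
        rw [MvPolynomial.mem_support_iff, hcoeff, if_pos rfl]
        exact MvPolynomial.mem_support_iff.mp hm
      have hVg : ∀ l' ∉ V, ∀ m' ∈ g.support, m' l' = m l' := by
        intro l' hl' m' hm'g
        by_cases h : l' = l
        · subst h
          have := MvPolynomial.mem_support_iff.mp hm'g
          rw [hcoeff] at this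
          by_contra hne
          rw [if_neg hne] at this
          exact this rfl
        · exact hV l' (by simp [h, hl']) m' (hsub hm'g)
      have := ih C hC g (Eop_mem hC (m l) l hf) (fun m' h i => hexp m' (hsub h) i) m hmg hVg
      rwa [hcoeff m, if_pos rfl] at this

end ClonoidAux

theorem monomial_in_clonoid_generated_by (p : ℕ) (hp : p.Prime) (A : Type*) [Fintype A]
    (f : MvPolynomial ℕ (A → ZMod p))
    (hexp : ∀ m ∈ f.support, ∀ i, m i ≤ p - 1)
    (m : ℕ →₀ ℕ) (hm : m ∈ f.support) :
    ∀ C, IsRPolyLinClosedClonoid p A C → f ∈ C →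
      MvPolynomial.monomial m (f.coeff m) ∈ C := by
  intro C hC hfC
  apply ClonoidAux.aux hp f.vars C hC f hfC hexp m hm
  intro l hl m' hm'
  have h1 : m' l = 0 := by
    by_contra h
    exact hl (MvPolynomial.mem_vars l |>.mpr ⟨m', hm', Finsupp.mem_support_iff.mpr h⟩)
  have h2 : m l = 0 := by
    by_contra h
    exact hl (MvPolynomial.mem_vars l |>.mpr ⟨m, hm, Finsupp.mem_support_iff.mpr h⟩)
  rw [h1, h2]
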